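/- arXiv:math/0508110 — 2 statements merged into one kernel-verified Lean document; each statement's English description precedes it below -/
import Mathlib

section
/- For every w ∈ W^P, define w^∨ ∈ W^P by w^∨(i) = 2n+1−w(n+1−i) for 1 ≤ i ≤ n. Then the length ℓ(w^∨) equals |λ| = λ_1 + ⋯ + λ_n, where λ = λ(D(w)) is the strict partition corresponding to w. -/
/-- `bar n i` is the involution `i ↦ 2n+1-i` on `{1,…,2n}`, written 0-indexed on `Fin (2n)`. -/
def bar (n : ℕ) (i : Fin (2 * n)) : Fin (2 * n) :=
  ⟨2 * n - 1 - i.val, by have := i.isLt; omega⟩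

/-- The embedding of `{1,…,n}` (0-indexed: `Fin n`) into `{1,…,2n}` (0-indexed: `Fin (2n)`). -/
def emb (n : ℕ) (i : Fin n) : Fin (2 * n) :=
  ⟨i.val, by have := i.isLt; omega⟩

/-- The Weyl group of type `C_n`: permutations `w` of `{1,…,2n}` with
`w(ī) = \overline{w(i)}` for all `i`. -/
def Wgroup (n : ℕ) : Set (Equiv.Perm (Fin (2 * n))) :=
  {w | ∀ i, w (bar n i) = bar n (w i)}

/-- The set `W^P`: elements `w` of `W` with `w(1) < w(2) < ⋯ < w(n)`. -/
def WP (n : ℕ) : Set (Equiv.Perm (Fin (2 * n))) :=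
  {w | w ∈ Wgroup n ∧ ∀ i j : Fin n, i < j → w (emb n i) < w (emb n j)}

/-- The standard generators of `W`: `s_i = (i,i+1)(\overline{i+1},ī)` for `1 ≤ i ≤ n−1`
(0-indexed: `i` with `i+1 < n`), and `s_n = (n, n̄)`. -/
def gens (n : ℕ) : Set (Equiv.Perm (Fin (2 * n))) :=
  {g | (∃ i : ℕ, ∃ h : i + 1 < n,
        g = Equiv.swap (⟨i, by omega⟩ : Fin (2 * n)) (⟨i + 1, by omega⟩ : Fin (2 * n)) *
            Equiv.swap (bar n ⟨i + 1, by omega⟩) (bar n ⟨i, by omega⟩)) ∨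
      (∃ h : 0 < n,
        g = Equiv.swap (⟨n - 1, by omega⟩ : Fin (2 * n)) (bar n ⟨n - 1, by omega⟩))}

/-- The length `ℓ(w)`: the minimal number of factors in an expression of `w` as a product
of the generators. -/
noncomputable def len (n : ℕ) (w : Equiv.Perm (Fin (2 * n))) : ℕ :=
  sInf {m : ℕ | ∃ l : List (Equiv.Perm (Fin (2 * n))),
    l.length = m ∧ (∀ g ∈ l, g ∈ gens n) ∧ l.prod = w}

/-- For `w ∈ W^P`, the sequence `D(w) = (n+1−w(1), …, 2n−w(n))`, 0-indexed. -/
def Dmap (n : ℕ) (w : Equiv.Perm (Fin (2 * n))) : Fin n → ℕ :=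
  fun i => n + i.val - (w (emb n i)).val

/-- Row lengths of the upper shifted diagram: `λ_i = max(d_i − i + 1, 0)`,
0-indexed: `λ i = d i − i` (truncated natural subtraction). -/
def lam (n : ℕ) (d : Fin n → ℕ) : Fin n → ℕ :=
  fun i => d i - i.val

-- auxiliary

def gA (n i : ℕ) (h : i + 1 < n) : Equiv.Perm (Fin (2 * n)) :=
  Equiv.swap (⟨i, by omega⟩ : Fin (2 * n)) (⟨i + 1, by omega⟩ : Fin (2 * n)) *
    Equiv.swap (bar n ⟨i + 1, by omega⟩) (bar n ⟨i, by omega⟩)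

def gB (n : ℕ) (h : 0 < n) : Equiv.Perm (Fin (2 * n)) :=
  Equiv.swap (⟨n - 1, by omega⟩ : Fin (2 * n)) (bar n ⟨n - 1, by omega⟩)

lemma gA_mem (n i : ℕ) (h : i + 1 < n) : gA n i h ∈ gens n := Or.inl ⟨i, h, rfl⟩

lemma gB_mem (n : ℕ) (h : 0 < n) : gB n h ∈ gens n := Or.inr ⟨h, rfl⟩

lemma gA_apply_val (n i : ℕ) (h : i + 1 < n) (x : Fin (2 * n)) :
    (gA n i h x).val =
      if x.val = i then i + 1 else if x.val = i + 1 then i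
      else if x.val = 2 * n - 2 - i then 2 * n - 1 - i
      else if x.val = 2 * n - 1 - i then 2 * n - 2 - i else x.val := by
  rcases x with ⟨xv, hx⟩
  simp only [gA, bar, Equiv.Perm.mul_apply, Equiv.swap_apply_def, Fin.mk.injEq]
  split_ifs <;> (try simp only [Fin.mk.injEq] at *) <;> (try dsimp only at *) <;> omega

lemma gB_apply_val (n : ℕ) (h : 0 < n) (x : Fin (2 * n)) :
    (gB n h x).val =
      if x.val = n - 1 then n else if x.val = n then n - 1 else x.val := by
  rcases x with ⟨xv, hx⟩
  simp only [gB, bar, Equiv.swap_apply_def, Fin.mk.injEq]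
  split_ifs <;> (try simp only [Fin.mk.injEq] at *) <;> (try dsimp only at *) <;> omega

lemma bar_val (n : ℕ) (x : Fin (2 * n)) : (bar n x).val = 2 * n - 1 - x.val := rfl

lemma bar_bar (n : ℕ) (x : Fin (2 * n)) : bar n (bar n x) = x := by
  have := x.isLt
  apply Fin.val_injective
  rw [bar_val, bar_val]
  omega

lemma gA_bar (n i : ℕ) (h : i + 1 < n) (x : Fin (2 * n)) :
    gA n i h (bar n x) = bar n (gA n i h x) := by
  have hx := x.isLt
  apply Fin.val_injective
  rw [bar_val, gA_apply_val, gA_apply_val, bar_val]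
  split_ifs <;> omega

lemma gB_bar (n : ℕ) (h : 0 < n) (x : Fin (2 * n)) :
    gB n h (bar n x) = bar n (gB n h x) := by
  have hx := x.isLt
  apply Fin.val_injective
  rw [bar_val, gB_apply_val, gB_apply_val, bar_val]
  split_ifs <;> omega

lemma gA_invol (n i : ℕ) (h : i + 1 < n) : gA n i h * gA n i h = 1 := by
  apply Equiv.ext
  intro x
  have hx := x.isLt
  apply Fin.val_injective
  show (gA n i h (gA n i h x)).val = _
  rw [gA_apply_val, gA_apply_val]
  simp only [Equiv.Perm.one_apply]
  split_ifs <;> omega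

lemma gB_invol (n : ℕ) (h : 0 < n) : gB n h * gB n h = 1 := by
  apply Equiv.ext
  intro x
  have hx := x.isLt
  apply Fin.val_injective
  show (gB n h (gB n h x)).val = _
  rw [gB_apply_val, gB_apply_val]
  simp only [Equiv.Perm.one_apply]
  split_ifs <;> omega

/-- the statistic: number of boxes of the strict partition of `v` (dual convention). -/
def statn (n : ℕ) (u : Equiv.Perm (Fin (2 * n))) : ℕ :=
  ∑ i : Fin n, ((u (emb n i)).val + 1 - n)

lemma statn_one (n : ℕ) : statn n 1 = 0 := by
  apply Finset.sum_eq_zero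
  intro i _
  have := i.isLt
  simp only [Equiv.Perm.one_apply, emb]
  omega

lemma sum_ite_le_one {α : Type*} [Fintype α] [DecidableEq α] (t : α → Prop) [DecidablePred t]
    (h : ∀ a b, t a → t b → a = b) :
    (∑ a : α, (if t a then 1 else 0)) ≤ 1 := by
  classical
  rw [Finset.sum_boole]
  norm_cast
  apply Finset.card_le_one.mpr
  intro a ha b hb
  simp only [Finset.mem_filter] at ha hb
  exact h a b ha.2 hb.2

lemma emb_inj (n : ℕ) {a b : Fin n} (h : emb n a = emb n b) : a = b := by
  have : (emb n a).val = (emb n b).val := congrArg Fin.val h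
  exact Fin.ext this

lemma statn_mul_le (n : ℕ) (g u : Equiv.Perm (Fin (2 * n))) (hg : g ∈ gens n) :
    statn n (g * u) ≤ statn n u + 1 := by
  have key : ∀ (t : ℕ) (G : Equiv.Perm (Fin (2 * n))),
      (∀ x : Fin (2 * n), (G x).val + 1 - n ≤ x.val + 1 - n + (if x.val = t then 1 else 0)) →
      statn n (G * u) ≤ statn n u + 1 := by
    intro t G hGt
    have h1 : statn n (G * u) ≤
        ∑ i : Fin n, ((u (emb n i)).val + 1 - n + (if (u (emb n i)).val = t then 1 else 0)) := by
      apply Finset.sum_le_sum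
      intro i _
      exact hGt (u (emb n i))
    rw [Finset.sum_add_distrib] at h1
    refine h1.trans (Nat.add_le_add_left ?_ _)
    apply sum_ite_le_one
    intro a b ha hb
    apply emb_inj n
    apply u.injective
    apply Fin.val_injective
    rw [ha, hb]
  rcases hg with ⟨i, h, hgeq⟩ | ⟨h, hgeq⟩
  · have hgeq' : g = gA n i h := hgeq
    subst hgeq'
    apply key (2 * n - 2 - i)
    intro x
    have hx := x.isLt
    rw [gA_apply_val]
    split_ifs <;> omega
  · have hgeq' : g = gB n h := hgeq
    subst hgeq'
    apply key (n - 1)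
    intro x
    have hx := x.isLt
    rw [gB_apply_val]
    split_ifs <;> omega

lemma statn_prod_le (n : ℕ) (l : List (Equiv.Perm (Fin (2 * n))))
    (hl : ∀ g ∈ l, g ∈ gens n) : statn n l.prod ≤ l.length := by
  induction l with
  | nil => simp [statn_one]
  | cons g l ih =>
      rw [List.prod_cons, List.length_cons]
      have h1 := statn_mul_le n g l.prod (hl g List.mem_cons_self)
      have h2 := ih (fun g' hg' => hl g' (List.mem_cons_of_mem g hg'))
      omega

lemma stat_step (n : ℕ) (u u' : Equiv.Perm (Fin (2 * n))) (i0 : Fin n)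
    (h : ∀ j : Fin n, j ≠ i0 →
      (u' (emb n j)).val + 1 - n = (u (emb n j)).val + 1 - n)
    (h0 : ((u' (emb n i0)).val + 1 - n) + 1 = (u (emb n i0)).val + 1 - n) :
    statn n u' + 1 = statn n u := by
  unfold statn
  rw [← Finset.add_sum_erase _ _ (Finset.mem_univ i0),
      ← Finset.add_sum_erase _ _ (Finset.mem_univ i0)]
  have he : ∑ j ∈ Finset.univ.erase i0, ((u' (emb n j)).val + 1 - n) =
      ∑ j ∈ Finset.univ.erase i0, ((u (emb n j)).val + 1 - n) :=
    Finset.sum_congr rfl (fun j hj => h j (Finset.ne_of_mem_erase hj))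
  omega

lemma reduce (n : ℕ) (v : Equiv.Perm (Fin (2 * n))) (hv : v ∈ WP n)
    (hpos : ∃ i : Fin n, n ≤ (v (emb n i)).val) :
    ∃ g, g ∈ gens n ∧ g * g = 1 ∧ g * v ∈ WP n ∧ statn n (g * v) + 1 = statn n v := by
  obtain ⟨hW, hmono0⟩ := hv
  have hmono : ∀ i j : Fin n, i < j → (v (emb n i)).val < (v (emb n j)).val :=
    fun i j hij => Fin.lt_def.mp (hmono0 i j hij)
  have hn0 : 0 < n := hpos.choose.pos
  -- minimal index with big value
  obtain ⟨i0, hc, hminle⟩ : ∃ i0 : Fin n, n ≤ (v (emb n i0)).val ∧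
      ∀ j : Fin n, n ≤ (v (emb n j)).val → i0 ≤ j := by
    classical
    obtain ⟨i, hi⟩ := hpos
    have hsne : (Finset.univ.filter (fun i : Fin n => n ≤ (v (emb n i)).val)).Nonempty :=
      ⟨i, by simp [hi]⟩
    refine ⟨Finset.min' _ hsne, ?_, ?_⟩
    · have := Finset.min'_mem _ hsne
      simpa using this
    · intro j hj
      exact Finset.min'_le _ j (by simp [hj])
  have hclt : (v (emb n i0)).val < 2 * n := (v (emb n i0)).isLt
  have hmin : ∀ j : Fin n, j < i0 → (v (emb n j)).val < n := by
    intro j hj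
    by_contra hcon
    push_neg at hcon
    exact absurd (lt_of_lt_of_le hj (hminle j hcon)) (lt_irrefl j)
  have huniqc : ∀ j : Fin n, (v (emb n j)).val = (v (emb n i0)).val → j = i0 := by
    intro j hj
    exact emb_inj n (v.injective (Fin.ext hj))
  have hK1 : ∀ j : Fin n, (v (emb n j)).val ≠ 2 * n - 1 - (v (emb n i0)).val := by
    intro j hj
    have h1 : v (emb n j) = bar n (v (emb n i0)) := Fin.ext (by rw [bar_val]; omega)
    rw [← hW (emb n i0)] at h1
    have h2 := congrArg Fin.val (v.injective h1)
    have h3 : (emb n j).val = j.val := rfl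
    have h4 : (bar n (emb n i0)).val = 2 * n - 1 - i0.val := rfl
    have hj' := j.isLt
    have hi0' := i0.isLt
    omega
  have hK2 : ∀ j : Fin n, (v (emb n j)).val ≠ (v (emb n i0)).val - 1 := by
    intro j hj
    by_cases hcn : (v (emb n i0)).val = n
    · exact hK1 j (by omega)
    · rcases lt_trichotomy j i0 with h | h | h
      · have := hmin j h; omega
      · subst h; omega
      · have := hmono i0 j h; omega
  -- case split on the minimal big value
  by_cases hcn : (v (emb n i0)).val = n
  · -- use the generator gB
    refine ⟨gB n hn0, gB_mem n hn0, gB_invol n hn0, ?_, ?_⟩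
    · constructor
      · intro x
        simp only [Equiv.Perm.mul_apply]
        rw [hW x, gB_bar]
      · have hval : ∀ j : Fin n, ((gB n hn0 * v) (emb n j)).val =
            if j = i0 then n - 1 else (v (emb n j)).val := by
          intro j
          rw [Equiv.Perm.mul_apply, gB_apply_val]
          by_cases hji : j = i0
          · subst hji
            rw [if_pos rfl]
            split_ifs <;> omega
          · rw [if_neg hji]
            have h1 := hK1 j
            have h2 : (v (emb n j)).val ≠ n := fun hh => hji (huniqc j (by omega))
            rw [if_neg (by omega), if_neg h2]
        intro i j hij
        rw [Fin.lt_def, hval i, hval j]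
        by_cases hii : i = i0 <;> by_cases hjj : j = i0
        · subst hii; subst hjj; exact absurd hij (lt_irrefl _)
        · subst hii
          rw [if_pos rfl, if_neg hjj]
          have := hmono i j hij
          omega
        · subst hjj
          rw [if_neg hii, if_pos rfl]
          have h1 := hmin i hij
          have h2 := hK1 i
          omega
        · rw [if_neg hii, if_neg hjj]
          exact hmono i j hij
    · have hval : ∀ j : Fin n, ((gB n hn0 * v) (emb n j)).val =
          if j = i0 then n - 1 else (v (emb n j)).val := by
        intro j
        rw [Equiv.Perm.mul_apply, gB_apply_val]
        by_cases hji : j = i0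
        · subst hji
          rw [if_pos rfl]
          split_ifs <;> omega
        · rw [if_neg hji]
          have h1 := hK1 j
          have h2 : (v (emb n j)).val ≠ n := fun hh => hji (huniqc j (by omega))
          rw [if_neg (by omega), if_neg h2]
      apply stat_step n v _ i0
      · intro j hj
        rw [hval j, if_neg hj]
      · rw [hval i0, if_pos rfl]
        omega
  · -- big value is > n : use the generator gA
    have hcgt : n < (v (emb n i0)).val := lt_of_le_of_ne hc (fun h => hcn h.symm)
    have hA : (2 * n - 1 - (v (emb n i0)).val) + 1 < n := by omega
    -- locate the companion value 2n - c in the first half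
    obtain ⟨q, hqv⟩ : ∃ q : Fin (2 * n), (v q).val = (v (emb n i0)).val - 1 :=
      ⟨v.symm ⟨(v (emb n i0)).val - 1, by omega⟩, by rw [Equiv.apply_symm_apply]⟩
    have hqlt := q.isLt
    have hq : n ≤ q.val := by
      by_contra hqc
      push_neg at hqc
      apply hK2 ⟨q.val, hqc⟩
      have he : emb n ⟨q.val, hqc⟩ = q := Fin.ext rfl
      rw [he, hqv]
    obtain ⟨j1, hj1v⟩ : ∃ j1 : Fin n, j1.val = 2 * n - 1 - q.val :=
      ⟨⟨2 * n - 1 - q.val, by omega⟩, rfl⟩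
    have hj1 : (v (emb n j1)).val = 2 * n - (v (emb n i0)).val := by
      have he : emb n j1 = bar n q := Fin.ext (by rw [bar_val]; exact hj1v)
      rw [he, hW q, bar_val, hqv]
      omega
    have huniqj1 : ∀ j : Fin n, (v (emb n j)).val = 2 * n - (v (emb n i0)).val → j = j1 := by
      intro j hj
      exact emb_inj n (v.injective (Fin.ext (by rw [hj, hj1])))
    have hj1i0 : j1 ≠ i0 := by
      intro hh
      rw [hh] at hj1
      omega
    have hj1lt : j1 < i0 := by
      rcases lt_trichotomy j1 i0 with h | h | h
      · exact h
      · exact absurd h hj1i0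
      · have := hmono i0 j1 h
        omega
    have hval : ∀ j : Fin n, ((gA n (2 * n - 1 - (v (emb n i0)).val) hA * v) (emb n j)).val =
        if j = i0 then (v (emb n i0)).val - 1
        else if j = j1 then 2 * n - 1 - (v (emb n i0)).val
        else (v (emb n j)).val := by
      intro j
      rw [Equiv.Perm.mul_apply, gA_apply_val]
      by_cases hji : j = i0
      · subst hji
        rw [if_pos rfl]
        split_ifs <;> omega
      · rw [if_neg hji]
        by_cases hjj : j = j1
        · subst hjj
          rw [if_pos rfl]
          have := hj1
          split_ifs <;> omega
        · rw [if_neg hjj]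
          have h1 := hK1 j
          have h2 := hK2 j
          have h3 : (v (emb n j)).val ≠ (v (emb n i0)).val :=
            fun hh => hji (huniqc j hh)
          have h4 : (v (emb n j)).val ≠ 2 * n - (v (emb n i0)).val :=
            fun hh => hjj (huniqj1 j hh)
          split_ifs <;> omega
    refine ⟨gA n (2 * n - 1 - (v (emb n i0)).val) hA,
      gA_mem n _ hA, gA_invol n _ hA, ⟨?_, ?_⟩, ?_⟩
    · intro x
      simp only [Equiv.Perm.mul_apply]
      rw [hW x, gA_bar]
    · intro i j hij
      rw [Fin.lt_def, hval i, hval j]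
      have hijv : i.val < j.val := Fin.lt_def.mp hij
      have hj1ltv : j1.val < i0.val := Fin.lt_def.mp hj1lt
      by_cases hji0 : j = i0
      · rw [if_pos hji0]
        have hii0 : i ≠ i0 := by
          intro h
          rw [h, hji0] at hijv
          omega
        rw [if_neg hii0]
        by_cases hij1 : i = j1
        · rw [if_pos hij1]
          omega
        · rw [if_neg hij1]
          have := hmono i i0 (hji0 ▸ hij)
          have := hK2 i
          omega
      · rw [if_neg hji0]
        by_cases hjj1 : j = j1
        · rw [if_pos hjj1]
          have hii0 : i ≠ i0 := by
            intro h
            rw [h] at hijv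
            rw [hjj1] at hijv
            omega
          have hij1 : i ≠ j1 := by
            intro h
            rw [h, hjj1] at hijv
            omega
          rw [if_neg hii0, if_neg hij1]
          have := hmono i j1 (hjj1 ▸ hij)
          have := hK1 i
          omega
        · rw [if_neg hjj1]
          by_cases hii0 : i = i0
          · rw [if_pos hii0]
            have := hmono i0 j (hii0 ▸ hij)
            omega
          · rw [if_neg hii0]
            by_cases hij1 : i = j1
            · rw [if_pos hij1]
              have := hmono j1 j (hij1 ▸ hij)
              have := hj1
              omega
            · rw [if_neg hij1]
              exact hmono i j hij
    · apply stat_step n v _ i0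
      · intro j hj
        rw [hval j, if_neg hj]
        by_cases hjj : j = j1
        · rw [if_pos hjj, hjj, hj1]
          omega
        · rw [if_neg hjj]
      · rw [hval i0, if_pos rfl]
        omega

lemma eq_one_of_statn_zero (n : ℕ) (v : Equiv.Perm (Fin (2 * n))) (hv : v ∈ WP n)
    (h0 : statn n v = 0) : v = 1 := by
  obtain ⟨hW, hmono0⟩ := hv
  have hmono : ∀ i j : Fin n, i < j → (v (emb n i)).val < (v (emb n j)).val :=
    fun i j hij => Fin.lt_def.mp (hmono0 i j hij)
  have hall : ∀ i : Fin n, (v (emb n i)).val < n := by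
    intro i
    have := Finset.sum_eq_zero_iff.mp h0 i (Finset.mem_univ i)
    have := (v (emb n i)).isLt
    omega
  have lower : ∀ k (hk : k < n), k ≤ (v (emb n ⟨k, hk⟩)).val := by
    intro k
    induction k with
    | zero => intro hk; exact Nat.zero_le _
    | succ k ih =>
        intro hk
        have h1 := ih (by omega)
        have h2 := hmono ⟨k, by omega⟩ ⟨k + 1, hk⟩ (Fin.mk_lt_mk.mpr (by omega))
        omega
  have upper : ∀ d (hd : d < n) k (hk : k < n), k = n - 1 - d →
      (v (emb n ⟨k, hk⟩)).val ≤ k := by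
    intro d
    induction d with
    | zero =>
        intro hd k hk hkd
        have := hall ⟨k, hk⟩
        omega
    | succ d ih =>
        intro hd k hk hkd
        have hk1 : k + 1 < n := by omega
        have h2 := ih (by omega) (k + 1) hk1 (by omega)
        have h3 := hmono ⟨k, hk⟩ ⟨k + 1, hk1⟩ (Fin.mk_lt_mk.mpr (by omega))
        omega
  have hfix : ∀ x : Fin (2 * n), x.val < n → v x = x := by
    intro x hx
    have h1 := lower x.val hx
    have h2 := upper (n - 1 - x.val) (by omega) x.val hx (by omega)
    have he : emb n ⟨x.val, hx⟩ = x := Fin.ext rfl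
    rw [he] at h1 h2
    exact Fin.ext (by omega)
  apply Equiv.ext
  intro x
  by_cases hx : x.val < n
  · rw [hfix x hx]; rfl
  · have hx2 := x.isLt
    have hb : (bar n x).val < n := by rw [bar_val]; omega
    have h1 : v (bar n (bar n x)) = bar n (v (bar n x)) := hW (bar n x)
    rw [bar_bar, hfix (bar n x) hb, bar_bar] at h1
    rw [h1]; rfl

lemma exists_word (n : ℕ) :
    ∀ m (v : Equiv.Perm (Fin (2 * n))), v ∈ WP n → statn n v = m →
    ∃ l : List (Equiv.Perm (Fin (2 * n))),
      l.length = m ∧ (∀ g ∈ l, g ∈ gens n) ∧ l.prod = v := by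
  intro m
  induction m with
  | zero =>
      intro v hv h0
      refine ⟨[], rfl, by simp, ?_⟩
      rw [List.prod_nil, eq_one_of_statn_zero n v hv h0]
  | succ m ih =>
      intro v hv hm
      have hpos : ∃ i : Fin n, n ≤ (v (emb n i)).val := by
        by_contra hno
        push_neg at hno
        have : statn n v = 0 := Finset.sum_eq_zero (fun i _ => by have := hno i; omega)
        omega
      obtain ⟨g, hg, hinv, hgv, hstat⟩ := reduce n v hv hpos
      obtain ⟨l, hl1, hl2, hl3⟩ := ih (g * v) hgv (by omega)
      refine ⟨g :: l, by simp [hl1], ?_, ?_⟩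
      · intro g' hg'
        rcases List.mem_cons.mp hg' with h | h
        · subst h; exact hg
        · exact hl2 _ h
      · rw [List.prod_cons, hl3, ← mul_assoc, hinv, one_mul]

lemma len_eq_statn (n : ℕ) (v : Equiv.Perm (Fin (2 * n))) (hv : v ∈ WP n) :
    len n v = statn n v := by
  obtain ⟨l, hl1, hl2, hl3⟩ := exists_word n (statn n v) v hv rfl
  have hmem : statn n v ∈ {m : ℕ | ∃ l : List (Equiv.Perm (Fin (2 * n))),
      l.length = m ∧ (∀ g ∈ l, g ∈ gens n) ∧ l.prod = v} := ⟨l, hl1, hl2, hl3⟩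
  have h1 : len n v ≤ statn n v := Nat.sInf_le hmem
  obtain ⟨l', hl1', hl2', hl3'⟩ := Nat.sInf_mem (⟨statn n v, hmem⟩ : Set.Nonempty _)
  have h2 : statn n v ≤ len n v := by
    have := statn_prod_le n l' hl2'
    rw [hl3', hl1'] at this
    exact this
  omega


/-- For `w ∈ W^P` and `w^∨ ∈ W^P` defined by `w^∨(i) = 2n+1−w(n+1−i)` for `1 ≤ i ≤ n`
(0-indexed: `w^∨(i) = \overline{w(n−1−i)}`), the length `ℓ(w^∨)` equals
`|λ| = λ_1 + ⋯ + λ_n` where `λ = λ(D(w))` is the strict partition corresponding to `w`. -/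
theorem len_vee_eq_weight (n : ℕ) (hn : 1 ≤ n)
    (w v : Equiv.Perm (Fin (2 * n))) (hw : w ∈ WP n) (hv : v ∈ WP n)
    (hvee : ∀ i : Fin n,
      v (emb n i) = bar n (w (emb n ⟨n - 1 - i.val, by have := i.isLt; omega⟩))) :
    len n v = ∑ i : Fin n, lam n (Dmap n w) i := by
  rw [len_eq_statn n v hv]
  calc statn n v
      = ∑ i : Fin n, (n - (w (emb n i.rev)).val) := by
        apply Finset.sum_congr rfl
        intro i _
        have hrev : (⟨n - 1 - i.val, by have := i.isLt; omega⟩ : Fin n) = i.rev :=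
          Fin.ext (by rw [Fin.val_rev]; show n - 1 - i.val = n - (i.val + 1); have := i.isLt; omega)
        rw [hvee i, bar_val, hrev]
        have := (w (emb n i.rev)).isLt
        omega
    _ = ∑ i : Fin n, (n - (w (emb n i)).val) :=
        Fintype.sum_equiv Fin.revPerm _ _ (fun i => by rw [Fin.revPerm_apply])
    _ = ∑ i : Fin n, lam n (Dmap n w) i := by
        apply Finset.sum_congr rfl
        intro i _
        have h1 := (w (emb n i)).isLt
        have h2 := i.isLt
        simp only [lam, Dmap]
        omega
end

section
/- Let w, w' ∈ W^P and let β be a positive root of type C_n such that w' = w·s_β and ℓ(w') = ℓ(w) − 1. Then exactly one of the following holds: (1) there exist indices i ≠ j such that the set of boxes of D(w') equals the set of boxes of D(w) together with the two boxes (i,j) and (j,i), β = ε_i + ε_j, and (ϖ_n, β^∨) = 2; (2) there exists an index i such that the set of boxes of D(w') equals the set of boxes of D(w) together with the single diagonal box (i,i), β = 2ε_i, and (ϖ_n, β^∨) = 1. -/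
/-- The boxes of a diagram `d`: the pairs `(i,j)` with `1 ≤ j ≤ d_i`
(0-indexed: `j.val < d i`). -/
def boxes (n : ℕ) (d : Fin n → ℕ) : Set (Fin n × Fin n) :=
  {p | p.2.val < d p.1}

/-- The standard basis vector `ε_i` of `ℝ^n`. -/
def eps (n : ℕ) (i : Fin n) : Fin n → ℝ :=
  fun j => if j = i then 1 else 0

/-- The standard inner product on `ℝ^n`. -/
def inn (n : ℕ) (u v : Fin n → ℝ) : ℝ :=
  ∑ j : Fin n, u j * v j

/-- The coroot `β^∨ = 2β/(β,β)`. -/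
noncomputable def coroot (n : ℕ) (β : Fin n → ℝ) : Fin n → ℝ :=
  (2 / inn n β β) • β

/-- The fundamental weight `ϖ_n = ε_1 + ⋯ + ε_n`. -/
def varpi (n : ℕ) : Fin n → ℝ :=
  fun _ => 1

/-- `(β, s_β)` is a pair of a positive root of type `C_n` together with the corresponding
reflection in `W`: for `β = ε_i − ε_j` (`i < j`) the permutation `(i,j)(ī,j̄)`;
for `β = ε_i + ε_j` (`i < j`) the permutation `(i,j̄)(j,ī)`; for `β = 2ε_i` the
transposition `(i,ī)`. -/
def rootReflPair (n : ℕ) (β : Fin n → ℝ) (r : Equiv.Perm (Fin (2 * n))) : Prop :=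
  (∃ i j : Fin n, i < j ∧ β = eps n i - eps n j ∧
      r = Equiv.swap (emb n i) (emb n j) * Equiv.swap (bar n (emb n i)) (bar n (emb n j))) ∨
  (∃ i j : Fin n, i < j ∧ β = eps n i + eps n j ∧
      r = Equiv.swap (emb n i) (bar n (emb n j)) * Equiv.swap (emb n j) (bar n (emb n i))) ∨
  (∃ i : Fin n, β = (2 : ℝ) • eps n i ∧
      r = Equiv.swap (emb n i) (bar n (emb n i)))

set_option maxHeartbeats 1000000


namespace ChevAux

open Finset Equiv

def inv' (M : ℕ) (w : Equiv.Perm (Fin M)) : ℕ :=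
  (Finset.univ.filter (fun p : Fin M × Fin M => p.1 < p.2 ∧ w p.2 < w p.1)).card

lemma swap_val {M : ℕ} (u v y : Fin M) :
    ((Equiv.swap u v) y).val =
      if y.val = u.val then v.val else if y.val = v.val then u.val else y.val := by
  rcases eq_or_ne y u with h | h
  · subst h; simp
  · rcases eq_or_ne y v with h2 | h2
    · subst h2
      rw [Equiv.swap_apply_right]
      simp [Fin.val_eq_val, h]
    · rw [Equiv.swap_apply_of_ne_of_ne h h2]
      simp [Fin.val_eq_val, h, h2]

lemma inv'_mul_swap {M : ℕ} (w : Equiv.Perm (Fin M)) (k : ℕ) (hk : k + 1 < M) :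
    inv' M (w * Equiv.swap ⟨k, by omega⟩ ⟨k + 1, hk⟩)
      + (if w ⟨k + 1, hk⟩ < w ⟨k, by omega⟩ then 1 else 0)
    = inv' M w + (if w ⟨k, by omega⟩ < w ⟨k + 1, hk⟩ then 1 else 0) := by
  have hkM : k < M := by omega
  set u : Fin M := ⟨k, hkM⟩ with hu
  set v : Fin M := ⟨k + 1, hk⟩ with hv
  set τ := Equiv.swap u v with hτ
  have hττ : ∀ x, τ (τ x) = x := fun x => Equiv.swap_apply_self u v x
  classical
  have hstep1 : inv' M (w * τ) =
      (Finset.univ.filter (fun p : Fin M × Fin M => τ p.1 < τ p.2 ∧ w p.2 < w p.1)).card := by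
    unfold inv'
    simp only [Equiv.Perm.mul_apply]
    apply Finset.card_nbij' (i := fun p => (τ p.1, τ p.2)) (j := fun p => (τ p.1, τ p.2))
    · intro p hp
      replace hp := Finset.mem_filter.mp hp; refine Finset.mem_filter.mpr ?_; simp only [mem_univ, true_and] at hp ⊢
      simpa [hττ] using hp
    · intro p hp
      replace hp := Finset.mem_filter.mp hp; refine Finset.mem_filter.mpr ?_; simp only [mem_univ, true_and] at hp ⊢
      simpa [hττ] using hp
    · intro p _; simp [hττ]
    · intro p _; simp [hττ]
  set S : Fin M × Fin M → Prop := fun p => p = (u, v) ∨ p = (v, u) with hS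
  have split : ∀ (P : Fin M × Fin M → Prop) [DecidablePred P],
      (Finset.univ.filter P).card
        = ((Finset.univ.filter P).filter S).card
            + ((Finset.univ.filter P).filter (fun p => ¬ S p)).card := by
    intro P _
    rw [Finset.card_filter_add_card_filter_not]
  have key : ∀ p : Fin M × Fin M, ¬ S p → (τ p.1 < τ p.2 ↔ p.1 < p.2) := by
    intro p hp
    have h1 : ¬(p.1.val = k ∧ p.2.val = k + 1) := by
      intro h; exact hp (Or.inl (Prod.ext (Fin.ext h.1) (Fin.ext h.2)))
    have h2 : ¬(p.1.val = k + 1 ∧ p.2.val = k) := by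
      intro h; exact hp (Or.inr (Prod.ext (Fin.ext h.1) (Fin.ext h.2)))
    rw [Fin.lt_def, Fin.lt_def, swap_val, swap_val]
    simp only [hu, hv]
    split_ifs <;> omega
  have hmid : ((Finset.univ.filter (fun p : Fin M × Fin M => τ p.1 < τ p.2 ∧ w p.2 < w p.1)).filter
        (fun p => ¬ S p))
      = ((Finset.univ.filter (fun p : Fin M × Fin M => p.1 < p.2 ∧ w p.2 < w p.1)).filter
        (fun p => ¬ S p)) := by
    ext p
    simp only [mem_filter, mem_univ, true_and]
    constructor
    · rintro ⟨⟨h1, h2⟩, h3⟩; exact ⟨⟨(key p h3).mp h1, h2⟩, h3⟩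
    · rintro ⟨⟨h1, h2⟩, h3⟩; exact ⟨⟨(key p h3).mpr h1, h2⟩, h3⟩
  have huv : u < v := by simp [hu, hv, Fin.lt_def]
  have hτu : τ u = v := Equiv.swap_apply_left u v
  have hτv : τ v = u := Equiv.swap_apply_right u v
  have hBspec : ((Finset.univ.filter (fun p : Fin M × Fin M => τ p.1 < τ p.2 ∧ w p.2 < w p.1)).filter S).card
      = (if w u < w v then 1 else 0) := by
    split_ifs with hcond
    · have : ((Finset.univ.filter (fun p : Fin M × Fin M => τ p.1 < τ p.2 ∧ w p.2 < w p.1)).filter S)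
          = {(v, u)} := by
        ext p
        simp only [mem_filter, mem_univ, true_and, mem_singleton]
        constructor
        · rintro ⟨⟨h1, h2⟩, h3 | h3⟩
          · exfalso; rw [h3] at h1; simp only [hτu, hτv] at h1; exact absurd (h1.trans huv) (lt_irrefl _)
          · exact h3
        · rintro rfl
          refine ⟨⟨?_, hcond⟩, Or.inr rfl⟩
          simp only [hτu, hτv]; exact huv
      rw [this, Finset.card_singleton]
    · have : ((Finset.univ.filter (fun p : Fin M × Fin M => τ p.1 < τ p.2 ∧ w p.2 < w p.1)).filter S)
          = ∅ := by
        ext p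
        simp only [mem_filter, mem_univ, true_and, Finset.notMem_empty, iff_false]
        rintro ⟨⟨h1, h2⟩, h3 | h3⟩
        · rw [h3] at h1; simp only [hτu, hτv] at h1; exact absurd (h1.trans huv) (lt_irrefl _)
        · rw [h3] at h2; exact hcond h2
      rw [this, Finset.card_empty]
  have hCspec : ((Finset.univ.filter (fun p : Fin M × Fin M => p.1 < p.2 ∧ w p.2 < w p.1)).filter S).card
      = (if w v < w u then 1 else 0) := by
    split_ifs with hcond
    · have : ((Finset.univ.filter (fun p : Fin M × Fin M => p.1 < p.2 ∧ w p.2 < w p.1)).filter S)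
          = {(u, v)} := by
        ext p
        simp only [mem_filter, mem_univ, true_and, mem_singleton]
        constructor
        · rintro ⟨⟨h1, h2⟩, h3 | h3⟩
          · exact h3
          · exfalso; rw [h3] at h1; exact absurd (h1.trans huv) (lt_irrefl _)
        · rintro rfl
          exact ⟨⟨huv, hcond⟩, Or.inl rfl⟩
      rw [this, Finset.card_singleton]
    · have : ((Finset.univ.filter (fun p : Fin M × Fin M => p.1 < p.2 ∧ w p.2 < w p.1)).filter S)
          = ∅ := by
        ext p
        simp only [mem_filter, mem_univ, true_and, Finset.notMem_empty, iff_false]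
        rintro ⟨⟨h1, h2⟩, h3 | h3⟩
        · rw [h3] at h2; exact hcond h2
        · rw [h3] at h1; exact absurd (h1.trans huv) (lt_irrefl _)
      rw [this, Finset.card_empty]
  have e1 := split (fun p : Fin M × Fin M => τ p.1 < τ p.2 ∧ w p.2 < w p.1)
  have e2 := split (fun p : Fin M × Fin M => p.1 < p.2 ∧ w p.2 < w p.1)
  have hfin : inv' M (w * τ) = (if w u < w v then 1 else 0)
      + ((Finset.univ.filter (fun p : Fin M × Fin M => p.1 < p.2 ∧ w p.2 < w p.1)).filter
          (fun p => ¬ S p)).card := by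
    rw [hstep1, e1, hBspec, hmid]
  have hfin2 : inv' M w = (if w v < w u then 1 else 0)
      + ((Finset.univ.filter (fun p : Fin M × Fin M => p.1 < p.2 ∧ w p.2 < w p.1)).filter
          (fun p => ¬ S p)).card := by
    unfold inv'; rw [e2, hCspec]
  rw [hfin, hfin2]
  have : ¬ (w u < w v ∧ w v < w u) := by
    rintro ⟨h1, h2⟩; exact absurd (h1.trans h2) (lt_irrefl _)
  split_ifs with h1 h2 <;> omega





variable {n : ℕ}

def mstat (n : ℕ) (w : Equiv.Perm (Fin (2 * n))) : ℕ :=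
  (Finset.univ.filter (fun p : Fin (2 * n) => p.val < n ∧ n ≤ (w p).val)).card

def Nstat (n : ℕ) (w : Equiv.Perm (Fin (2 * n))) : ℕ := inv' (2 * n) w + mstat n w

lemma bar_val (y : Fin (2 * n)) : (bar n y).val = 2 * n - 1 - y.val := rfl

lemma mstat_mul_half (w σ : Equiv.Perm (Fin (2 * n)))
    (hσ : ∀ p, ((σ p).val < n ↔ p.val < n)) :
    mstat n (w * σ) = mstat n w := by
  classical
  unfold mstat
  simp only [Equiv.Perm.mul_apply]
  apply Finset.card_nbij' (i := fun p => σ p) (j := fun p => σ.symm p)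
  · intro p hp
    replace hp := Finset.mem_filter.mp hp; refine Finset.mem_filter.mpr ?_; simp only [mem_univ, true_and] at hp ⊢
    exact ⟨(hσ p).mpr hp.1, hp.2⟩
  · intro p hp
    replace hp := Finset.mem_filter.mp hp; refine Finset.mem_filter.mpr ?_; simp only [mem_univ, true_and] at hp ⊢
    refine ⟨?_, ?_⟩
    · have := hσ (σ.symm p)
      rw [Equiv.apply_symm_apply] at this
      exact this.mp hp.1
    · rw [Equiv.apply_symm_apply]
      exact hp.2
  · intro p _; simp
  · intro p _; simp

lemma swap_half_lo (u v : Fin (2 * n)) (hu : u.val < n) (hv : v.val < n) (p : Fin (2 * n)) :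
    ((Equiv.swap u v p).val < n ↔ p.val < n) := by
  rw [swap_val]; split_ifs <;> omega

lemma swap_half_hi (u v : Fin (2 * n)) (hu : n ≤ u.val) (hv : n ≤ v.val) (p : Fin (2 * n)) :
    ((Equiv.swap u v p).val < n ↔ p.val < n) := by
  rw [swap_val]; split_ifs <;> omega

lemma card_filter_split {α : Type*} [DecidableEq α] [Fintype α]
    (P : α → Prop) [DecidablePred P] (x : α) :
    (Finset.univ.filter P).card
      = ((Finset.univ.filter P).filter (fun p => ¬ p = x)).card + (if P x then 1 else 0) := by
  have h0 := Finset.card_filter_add_card_filter_not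
    (s := Finset.univ.filter P) (p := fun p => p = x)
  have h1 : (Finset.univ.filter P).filter (fun p => p = x) = if P x then {x} else ∅ := by
    split_ifs with h
    · ext p
      simp only [mem_filter, mem_univ, true_and, mem_singleton]
      constructor
      · rintro ⟨_, h2⟩; exact h2
      · rintro rfl; exact ⟨h, rfl⟩
    · ext p
      simp only [mem_filter, mem_univ, true_and, Finset.notMem_empty, iff_false]
      rintro ⟨hP, rfl⟩; exact h hP
  rw [h1] at h0
  split_ifs at h0 ⊢ with h
  · rw [Finset.card_singleton] at h0; omega
  · rw [Finset.card_empty] at h0; omega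

lemma mstat_mul_swapn (hn : 0 < n) (w : Equiv.Perm (Fin (2 * n))) :
    mstat n (w * Equiv.swap (⟨n - 1, by omega⟩ : Fin (2 * n)) ⟨n, by omega⟩)
      + (if n ≤ (w ⟨n - 1, by omega⟩).val then 1 else 0)
    = mstat n w + (if n ≤ (w ⟨n, by omega⟩).val then 1 else 0) := by
  classical
  set x : Fin (2 * n) := ⟨n - 1, by omega⟩ with hx
  set y : Fin (2 * n) := ⟨n, by omega⟩ with hy
  set τ := Equiv.swap x y with hτ
  have hxy : x ≠ y := by simp [hx, hy, Fin.ext_iff]; omega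
  unfold mstat
  rw [card_filter_split (fun p => p.val < n ∧ n ≤ ((w * τ) p).val) x,
      card_filter_split (fun p => p.val < n ∧ n ≤ (w p).val) x]
  have hmid : ((Finset.univ.filter (fun p : Fin (2 * n) => p.val < n ∧ n ≤ ((w * τ) p).val)).filter
        (fun p => ¬ p = x))
      = ((Finset.univ.filter (fun p : Fin (2 * n) => p.val < n ∧ n ≤ (w p).val)).filter
        (fun p => ¬ p = x)) := by
    ext p
    simp only [mem_filter, mem_univ, true_and]
    simp only [Equiv.Perm.mul_apply]
    have hfix : ∀ (hp1 : p.val < n) (hp3 : ¬ p = x), τ p = p := by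
      intro hp1 hp3
      apply Equiv.swap_apply_of_ne_of_ne hp3
      have hyval : (⟨n, by omega⟩ : Fin (2 * n)).val = n := rfl
      intro hpy
      rw [hpy] at hp1
      simp only [hy] at hp1
      omega
    constructor
    · rintro ⟨⟨h1, h2⟩, h3⟩
      rw [hfix h1 h3] at h2
      exact ⟨⟨h1, h2⟩, h3⟩
    · rintro ⟨⟨h1, h2⟩, h3⟩
      refine ⟨⟨h1, ?_⟩, h3⟩
      rw [hfix h1 h3]
      exact h2
  rw [hmid]
  have hτx : τ x = y := Equiv.swap_apply_left x y
  have h1 : ((w * τ) x).val = (w y).val := by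
    simp only [Equiv.Perm.mul_apply, hτx]
  have hxval : x.val < n := by simp [hx]; omega
  have e1 : (if (x.val < n ∧ n ≤ ((w * τ) x).val) then 1 else 0)
      = (if n ≤ (w y).val then 1 else 0) := by
    rw [h1, if_congr (and_iff_right hxval) rfl rfl]
  have e2 : (if (x.val < n ∧ n ≤ (w x).val) then 1 else 0)
      = (if n ≤ (w x).val then 1 else 0) := by
    rw [if_congr (and_iff_right hxval) rfl rfl]
  rw [e1, e2]
  omega



lemma inv'_mul_swap' {M : ℕ} (w : Equiv.Perm (Fin M)) (u v : Fin M) (huv : u.val + 1 = v.val) :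
    inv' M (w * Equiv.swap u v) + (if w v < w u then 1 else 0)
      = inv' M w + (if w u < w v then 1 else 0) := by
  obtain ⟨uv, hult⟩ := u
  obtain ⟨vv, hvlt⟩ := v
  have h2 : uv + 1 = vv := huv
  subst h2
  exact inv'_mul_swap w uv hvlt

lemma mstat_mul_swapn' (hn : 0 < n) (w : Equiv.Perm (Fin (2 * n))) (x y : Fin (2 * n))
    (hx : x.val = n - 1) (hy : y.val = n) :
    mstat n (w * Equiv.swap x y) + (if n ≤ (w x).val then 1 else 0)
      = mstat n w + (if n ≤ (w y).val then 1 else 0) := by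
  obtain ⟨xv, hxlt⟩ := x
  obtain ⟨yv, hylt⟩ := y
  have hx2 : xv = n - 1 := hx
  have hy2 : yv = n := hy
  subst hx2
  subst hy2
  exact mstat_mul_swapn hn w

lemma nstat_typeA_le' (w : Equiv.Perm (Fin (2 * n))) (u v c d : Fin (2 * n))
    (huv : u.val + 1 = v.val) (hv : v.val < n) (hcd : c.val + 1 = d.val) (hc : n ≤ c.val) :
    Nstat n (w * (Equiv.swap u v * Equiv.swap c d)) ≤ Nstat n w + 2 := by
  rw [← mul_assoc]
  have a1 := inv'_mul_swap' w u v huv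
  have a2 := inv'_mul_swap' (w * Equiv.swap u v) c d hcd
  have m1 := mstat_mul_half w (Equiv.swap u v) (swap_half_lo u v (by omega) hv)
  have m2 := mstat_mul_half (w * Equiv.swap u v) (Equiv.swap c d)
    (swap_half_hi c d hc (by omega))
  unfold Nstat
  rw [m2, m1]
  split_ifs at a1 a2 <;> omega

lemma nstat_typeA_descent' (w : Equiv.Perm (Fin (2 * n))) (u v c d : Fin (2 * n))
    (huv : u.val + 1 = v.val) (hv : v.val < n) (hcd : c.val + 1 = d.val) (hc : n ≤ c.val)
    (hd1 : w v < w u) (hd2 : (w * Equiv.swap u v) d < (w * Equiv.swap u v) c) :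
    Nstat n (w * (Equiv.swap u v * Equiv.swap c d)) + 2 = Nstat n w := by
  rw [← mul_assoc]
  have a1 := inv'_mul_swap' w u v huv
  rw [if_pos hd1, if_neg (asymm hd1)] at a1
  have a2 := inv'_mul_swap' (w * Equiv.swap u v) c d hcd
  rw [if_pos hd2, if_neg (asymm hd2)] at a2
  have m1 := mstat_mul_half w (Equiv.swap u v) (swap_half_lo u v (by omega) hv)
  have m2 := mstat_mul_half (w * Equiv.swap u v) (Equiv.swap c d)
    (swap_half_hi c d hc (by omega))
  unfold Nstat
  rw [m2, m1]
  omega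

lemma nstat_sn_le' (hn : 0 < n) (w : Equiv.Perm (Fin (2 * n))) (u v : Fin (2 * n))
    (hu : u.val = n - 1) (hv : v.val = n) :
    Nstat n (w * Equiv.swap u v) ≤ Nstat n w + 2 := by
  have a1 := inv'_mul_swap' w u v (by omega)
  have m1 := mstat_mul_swapn' hn w u v hu hv
  unfold Nstat
  split_ifs at a1 m1 <;> omega

lemma nstat_sn_descent' (hn : 0 < n) (w : Equiv.Perm (Fin (2 * n))) (u v : Fin (2 * n))
    (hu : u.val = n - 1) (hv : v.val = n) (hd : w v < w u)
    (hval : (w v).val = 2 * n - 1 - (w u).val) :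
    Nstat n (w * Equiv.swap u v) + 2 = Nstat n w := by
  have hwu := (w u).isLt
  have hwv := (w v).isLt
  have hdval : (w v).val < (w u).val := hd
  have a1 := inv'_mul_swap' w u v (by omega)
  rw [if_pos hd, if_neg (asymm hd)] at a1
  have m1 := mstat_mul_swapn' hn w u v hu hv
  rw [if_pos (show n ≤ (w u).val by omega), if_neg (show ¬ n ≤ (w v).val by omega)] at m1
  unfold Nstat
  omega

lemma nstat_one : Nstat n 1 = 0 := by
  unfold Nstat inv' mstat
  rw [Finset.card_eq_zero.mpr, Finset.card_eq_zero.mpr]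
  · ext p
    simp only [Finset.mem_filter, Finset.mem_univ, true_and, Finset.notMem_empty, iff_false]
    rintro ⟨h1, h2⟩
    simp only [Equiv.Perm.one_apply] at h2
    omega
  · ext p
    simp only [Finset.mem_filter, Finset.mem_univ, true_and, Finset.notMem_empty, iff_false]
    rintro ⟨h1, h2⟩
    simp only [Equiv.Perm.one_apply] at h2
    exact absurd (h1.trans h2) (lt_irrefl _)

lemma Wgroup_mul {w g : Equiv.Perm (Fin (2 * n))} (hw : w ∈ Wgroup n) (hg : g ∈ Wgroup n) :
    w * g ∈ Wgroup n := by
  intro x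
  simp only [Equiv.Perm.mul_apply, hg x, hw (g x)]

lemma gens_mem_Wgroup {g : Equiv.Perm (Fin (2 * n))} (hg : g ∈ gens n) : g ∈ Wgroup n := by
  rcases hg with ⟨i, hi, rfl⟩ | ⟨hn, rfl⟩
  · intro x
    apply Fin.ext
    simp only [Equiv.Perm.mul_apply, swap_val, bar_val, Fin.val_mk]
    have := x.isLt
    grind
  · intro x
    apply Fin.ext
    simp only [swap_val, bar_val, Fin.val_mk]
    have := x.isLt
    grind

lemma gen_sq {g : Equiv.Perm (Fin (2 * n))} (hg : g ∈ gens n) : g * g = 1 := by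
  rcases hg with ⟨i, hi, rfl⟩ | ⟨hn, rfl⟩
  · ext x
    simp only [Equiv.Perm.mul_apply, Equiv.Perm.one_apply, swap_val, bar_val, Fin.val_mk]
    have := x.isLt
    grind
  · rw [Equiv.swap_mul_self]

lemma exists_descent (w : Equiv.Perm (Fin (2 * n))) (hw : w ∈ Wgroup n) (hne : w ≠ 1) :
    ∃ k : ℕ, ∃ h : k + 1 < 2 * n, k + 1 ≤ n ∧
      w ⟨k + 1, h⟩ < w ⟨k, by omega⟩ := by
  have H : ∃ k : ℕ, ∃ h : k + 1 < 2 * n, w ⟨k + 1, h⟩ < w ⟨k, by omega⟩ := by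
    by_contra hno
    push_neg at hno
    have hstep : ∀ (k : ℕ) (h : k + 1 < 2 * n), w ⟨k, by omega⟩ < w ⟨k + 1, h⟩ := by
      intro k h
      have h1 := hno k h
      rcases eq_or_lt_of_le h1 with h2 | h2
      · exfalso
        have := w.injective h2
        simp only [Fin.ext_iff, Fin.val_mk] at this
        omega
      · exact h2
    have hchain : ∀ (b a : ℕ) (hab : a < b) (hb : b < 2 * n),
        w ⟨a, by omega⟩ < w ⟨b, hb⟩ := by
      intro b
      induction b with
      | zero => intro a hab _; omega
      | succ b ihb =>
        intro a hab hb
        rcases Nat.lt_or_ge a b with h | h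
        · exact (ihb a h (by omega)).trans (hstep b hb)
        · have hab2 : a = b := by omega
          subst hab2
          exact hstep a hb
    have hmono : StrictMono w := by
      intro x y hxy
      have hx : x = ⟨x.val, x.isLt⟩ := Fin.ext rfl
      have hy : y = ⟨y.val, y.isLt⟩ := Fin.ext rfl
      rw [hx, hy]
      exact hchain y.val x.val hxy y.isLt
    have hsymm : StrictMono ⇑w.symm := by
      intro a b hab
      rcases lt_trichotomy (w.symm a) (w.symm b) with h | h | h
      · exact h
      · exfalso
        have : a = b := by
          have := congrArg w h
          simpa using this
        exact absurd this (ne_of_lt hab)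
      · exfalso
        have := hmono h
        simp only [Equiv.apply_symm_apply] at this
        exact absurd (hab.trans this) (lt_irrefl _)
    haveI hwf : WellFoundedLT (Fin (2 * n)) := Finite.to_wellFoundedLT
    apply hne
    apply Equiv.ext
    intro x
    have h1 : x ≤ w x := hmono.le_apply
    have h2 : w x ≤ x := by
      have h3 : x ≤ w.symm x := hsymm.le_apply
      have := hmono.monotone h3
      simpa using this
    simp only [Equiv.Perm.one_apply]
    exact le_antisymm h2 h1
  obtain ⟨k, hk2n, hdesc⟩ := H
  by_cases hkn : k + 1 ≤ n
  · exact ⟨k, hk2n, hkn, hdesc⟩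
  · have hn0 : 0 < n := by
      by_contra h
      push_neg at h
      interval_cases n
      omega
    refine ⟨2 * n - 2 - k, by omega, by omega, ?_⟩
    have e1 : (⟨2 * n - 2 - k + 1, by omega⟩ : Fin (2 * n)) = bar n ⟨k, by omega⟩ :=
      Fin.ext (by simp only [bar_val, Fin.val_mk]; omega)
    have e2 : (⟨2 * n - 2 - k, by omega⟩ : Fin (2 * n)) = bar n ⟨k + 1, hk2n⟩ :=
      Fin.ext (by simp only [bar_val, Fin.val_mk]; omega)
    rw [e1, e2, hw, hw]
    rw [Fin.lt_def] at hdesc ⊢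
    simp only [bar_val]
    have i1 := (w ⟨k, by omega⟩).isLt
    have i2 := (w ⟨k + 1, hk2n⟩).isLt
    omega

lemma nstat_le_two_mul_length (l : List (Equiv.Perm (Fin (2 * n))))
    (hl : ∀ g ∈ l, g ∈ gens n) : Nstat n l.prod ≤ 2 * l.length := by
  induction l using List.reverseRecOn with
  | nil => simp [nstat_one]
  | append_singleton l g ih =>
    have hg : g ∈ gens n := hl g (by simp)
    have hl' : ∀ g' ∈ l, g' ∈ gens n := fun g' hg' => hl g' (by simp [hg'])
    have hih := ih hl'
    rw [List.prod_append, List.prod_singleton, List.length_append, List.length_singleton]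
    have hstep : Nstat n (l.prod * g) ≤ Nstat n l.prod + 2 := by
      rcases hg with ⟨i, hi, rfl⟩ | ⟨hn, rfl⟩
      · exact nstat_typeA_le' l.prod _ _ _ _ rfl hi
          (by simp only [bar_val, Fin.val_mk]; omega) (by simp only [bar_val, Fin.val_mk]; omega)
      · exact nstat_sn_le' hn l.prod _ _ rfl (by simp only [bar_val, Fin.val_mk]; omega)
    omega

lemma typeA_second_descent (w : Equiv.Perm (Fin (2 * n))) (hw : w ∈ Wgroup n)
    (i : ℕ) (hi : i + 1 < n)
    (hd : w ⟨i + 1, by omega⟩ < w ⟨i, by omega⟩) :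
    (w * Equiv.swap (⟨i, by omega⟩ : Fin (2 * n)) ⟨i + 1, by omega⟩) (bar n ⟨i, by omega⟩)
      < (w * Equiv.swap (⟨i, by omega⟩ : Fin (2 * n)) ⟨i + 1, by omega⟩) (bar n ⟨i + 1, by omega⟩) := by
  have hfix1 : Equiv.swap (⟨i, by omega⟩ : Fin (2 * n)) ⟨i + 1, by omega⟩ (bar n ⟨i, by omega⟩)
      = bar n ⟨i, by omega⟩ := by
    apply Equiv.swap_apply_of_ne_of_ne <;>
      (apply Fin.ne_of_val_ne; simp only [bar_val, Fin.val_mk]; omega)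
  have hfix2 : Equiv.swap (⟨i, by omega⟩ : Fin (2 * n)) ⟨i + 1, by omega⟩ (bar n ⟨i + 1, by omega⟩)
      = bar n ⟨i + 1, by omega⟩ := by
    apply Equiv.swap_apply_of_ne_of_ne <;>
      (apply Fin.ne_of_val_ne; simp only [bar_val, Fin.val_mk]; omega)
  have hw' : ∀ i, w (bar n i) = bar n (w i) := hw
  rw [Equiv.Perm.mul_apply, Equiv.Perm.mul_apply, hfix1, hfix2]
  simp only [hw']
  rw [Fin.lt_def] at hd ⊢
  simp only [bar_val]
  have i1 := (w ⟨i, by omega⟩).isLt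
  have i2 := (w ⟨i + 1, by omega⟩).isLt
  omega

lemma exists_word (w : Equiv.Perm (Fin (2 * n))) (hw : w ∈ Wgroup n) :
    ∃ l : List (Equiv.Perm (Fin (2 * n))),
      (∀ g ∈ l, g ∈ gens n) ∧ l.prod = w ∧ 2 * l.length ≤ Nstat n w := by
  generalize hN : Nstat n w = N
  induction N using Nat.strong_induction_on generalizing w with
  | _ N ih =>
    by_cases hne : w = 1
    · subst hne
      exact ⟨[], by simp, by simp, by simp⟩
    · obtain ⟨k, hk2n, hkn, hd⟩ := exists_descent w hw hne
      by_cases hcase : k + 1 < n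
      · set g : Equiv.Perm (Fin (2 * n)) :=
          Equiv.swap (⟨k, by omega⟩ : Fin (2 * n)) ⟨k + 1, by omega⟩ *
            Equiv.swap (bar n ⟨k + 1, by omega⟩) (bar n ⟨k, by omega⟩) with hgdef
        have hgmem : g ∈ gens n := Or.inl ⟨k, hcase, rfl⟩
        have hdes : Nstat n (w * g) + 2 = Nstat n w := by
          rw [hgdef]
          exact nstat_typeA_descent' w _ _ _ _ rfl hcase
            (by simp only [bar_val, Fin.val_mk]; omega)
            (by simp only [bar_val, Fin.val_mk]; omega)
            hd (typeA_second_descent w hw k hcase hd)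
        have hwg : w * g ∈ Wgroup n := Wgroup_mul hw (gens_mem_Wgroup hgmem)
        obtain ⟨l, hl1, hl2, hl3⟩ := ih (Nstat n (w * g)) (by omega) (w * g) hwg rfl
        refine ⟨l ++ [g], ?_, ?_, ?_⟩
        · intro g' hg'
          rcases List.mem_append.mp hg' with h | h
          · exact hl1 g' h
          · rw [List.mem_singleton.mp h]; exact hgmem
        · rw [List.prod_append, List.prod_singleton, hl2, mul_assoc, gen_sq hgmem, mul_one]
        · rw [List.length_append, List.length_singleton]
          omega
      · have hn0 : 0 < n := by omega
        have hkval : k = n - 1 := by omega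
        set g : Equiv.Perm (Fin (2 * n)) :=
          Equiv.swap (⟨n - 1, by omega⟩ : Fin (2 * n)) (bar n ⟨n - 1, by omega⟩) with hgdef
        have hgmem : g ∈ gens n := Or.inr ⟨hn0, rfl⟩
        have hd' : w (bar n ⟨n - 1, by omega⟩) < w (⟨n - 1, by omega⟩ : Fin (2 * n)) := by
          have e1 : (bar n ⟨n - 1, by omega⟩ : Fin (2 * n)) = ⟨k + 1, hk2n⟩ :=
            Fin.ext (by simp only [bar_val, Fin.val_mk]; omega)
          have e2 : ((⟨n - 1, by omega⟩ : Fin (2 * n))) = ⟨k, by omega⟩ :=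
            Fin.ext (by simp only [Fin.val_mk]; omega)
          rw [e1, e2]
          exact hd
        have hval : (w (bar n ⟨n - 1, by omega⟩)).val
            = 2 * n - 1 - (w (⟨n - 1, by omega⟩ : Fin (2 * n))).val := by
          have hw' : ∀ i, w (bar n i) = bar n (w i) := hw
          simp only [hw', bar_val]
        have hdes : Nstat n (w * g) + 2 = Nstat n w := by
          rw [hgdef]
          exact nstat_sn_descent' hn0 w _ _ (by simp only [Fin.val_mk])
            (by simp only [bar_val, Fin.val_mk]; omega) hd' hval
        have hwg : w * g ∈ Wgroup n := Wgroup_mul hw (gens_mem_Wgroup hgmem)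
        obtain ⟨l, hl1, hl2, hl3⟩ := ih (Nstat n (w * g)) (by omega) (w * g) hwg rfl
        refine ⟨l ++ [g], ?_, ?_, ?_⟩
        · intro g' hg'
          rcases List.mem_append.mp hg' with h | h
          · exact hl1 g' h
          · rw [List.mem_singleton.mp h]; exact hgmem
        · rw [List.prod_append, List.prod_singleton, hl2, mul_assoc, gen_sq hgmem, mul_one]
        · rw [List.length_append, List.length_singleton]
          omega

lemma two_mul_len (w : Equiv.Perm (Fin (2 * n))) (hw : w ∈ Wgroup n) :
    2 * len n w = Nstat n w := by
  obtain ⟨l, hl1, hl2, hl3⟩ := exists_word w hw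
  have hmem : l.length ∈ {m : ℕ | ∃ l' : List (Equiv.Perm (Fin (2 * n))),
      l'.length = m ∧ (∀ g ∈ l', g ∈ gens n) ∧ l'.prod = w} := ⟨l, rfl, hl1, hl2⟩
  have h1 : len n w ≤ l.length := Nat.sInf_le hmem
  have hne : {m : ℕ | ∃ l' : List (Equiv.Perm (Fin (2 * n))),
      l'.length = m ∧ (∀ g ∈ l', g ∈ gens n) ∧ l'.prod = w}.Nonempty := ⟨l.length, hmem⟩
  obtain ⟨l0, hl0len, hl0g, hl0prod⟩ := Nat.sInf_mem hne
  have h2 : Nstat n w ≤ 2 * len n w := by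
    have hb : Nstat n l0.prod ≤ 2 * l0.length := nstat_le_two_mul_length l0 hl0g
    rw [hl0prod] at hb
    have hlen0 : l0.length = len n w := by unfold len; exact hl0len
    omega
  omega

def vfun (n : ℕ) (w : Equiv.Perm (Fin (2 * n))) (k : Fin n) : ℕ := (w (emb n k)).val

def NPpair (n : ℕ) (w : Equiv.Perm (Fin (2 * n))) : ℕ :=
  (Finset.univ.filter (fun p : Fin n × Fin n => 2 * n ≤ vfun n w p.1 + vfun n w p.2)).card

def NPm (n : ℕ) (w : Equiv.Perm (Fin (2 * n))) : ℕ :=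
  (Finset.univ.filter (fun k : Fin n => n ≤ vfun n w k)).card

lemma vfun_lt (w : Equiv.Perm (Fin (2 * n))) (k : Fin n) : vfun n w k < 2 * n :=
  (w (emb n k)).isLt

lemma WP_mono {w : Equiv.Perm (Fin (2 * n))} (hw : w ∈ WP n) {k l : Fin n} (h : k < l) :
    vfun n w k < vfun n w l := hw.2 k l h

lemma WP_lt_iff {w : Equiv.Perm (Fin (2 * n))} (hw : w ∈ WP n) (k l : Fin n) :
    vfun n w k < vfun n w l ↔ k < l := by
  constructor
  · intro h
    rcases lt_trichotomy k l with h2 | h2 | h2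
    · exact h2
    · subst h2; exact absurd h (lt_irrefl _)
    · exact absurd (h.trans (WP_mono hw h2)) (lt_irrefl _)
  · exact WP_mono hw

lemma pair_rep {w : Equiv.Perm (Fin (2 * n))} (hw : w ∈ WP n) (y : Fin (2 * n)) :
    ∃ k : Fin n, w (emb n k) = y ∨ w (emb n k) = bar n y := by
  set q := w.symm y with hq
  by_cases h : q.val < n
  · refine ⟨⟨q.val, h⟩, Or.inl ?_⟩
    have : emb n ⟨q.val, h⟩ = q := Fin.ext rfl
    rw [this, hq, Equiv.apply_symm_apply]
  · have hq2 := q.isLt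
    refine ⟨⟨2 * n - 1 - q.val, by omega⟩, Or.inr ?_⟩
    have : emb n ⟨2 * n - 1 - q.val, by omega⟩ = bar n q := Fin.ext rfl
    rw [this, hw.1 q, hq, Equiv.apply_symm_apply]

lemma pair_rep_unique {w : Equiv.Perm (Fin (2 * n))} (hw : w ∈ WP n) (k l : Fin n) :
    w (emb n k) ≠ bar n (w (emb n l)) := by
  intro h
  rw [← hw.1 (emb n l)] at h
  have := w.injective h
  have h1 : (emb n k).val = k.val := rfl
  have h2 : (bar n (emb n l)).val = 2 * n - 1 - l.val := rfl
  rw [Fin.ext_iff, h1, h2] at this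
  have := k.isLt
  have := l.isLt
  omega

lemma mstat_eq_NPm {w : Equiv.Perm (Fin (2 * n))} (hw : w ∈ WP n) : mstat n w = NPm n w := by
  unfold mstat NPm
  symm
  apply Finset.card_bij (fun (k : Fin n) _ => emb n k)
  · intro k hk
    simp only [Finset.mem_filter, Finset.mem_univ, true_and] at hk ⊢
    exact ⟨k.isLt, hk⟩
  · intro a _ b _ h
    have : (emb n a).val = (emb n b).val := congrArg Fin.val h
    exact Fin.ext this
  · intro p hp
    simp only [Finset.mem_filter, Finset.mem_univ, true_and] at hp
    refine ⟨⟨p.val, hp.1⟩, ?_, Fin.ext rfl⟩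
    simp only [Finset.mem_filter, Finset.mem_univ, true_and]
    have he : emb n ⟨p.val, hp.1⟩ = p := Fin.ext rfl
    unfold vfun
    rw [he]
    exact hp.2

lemma inv'_eq_NPpair {w : Equiv.Perm (Fin (2 * n))} (hw : w ∈ WP n) :
    inv' (2 * n) w = NPpair n w := by
  unfold inv' NPpair
  symm
  apply Finset.card_bij (fun (p : Fin n × Fin n) _ => (emb n p.1, bar n (emb n p.2)))
  · intro p hp
    simp only [Finset.mem_filter, Finset.mem_univ, true_and] at hp ⊢
    have h1 := p.1.isLt
    have h2 := p.2.isLt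
    have hv2 := vfun_lt (w := w) p.2
    constructor
    · rw [Fin.lt_def]
      show p.1.val < 2 * n - 1 - p.2.val
      omega
    · rw [hw.1 (emb n p.2), Fin.lt_def]
      show 2 * n - 1 - (vfun n w p.2) < vfun n w p.1
      omega
  · intro a _ b _ h
    have h1 : (emb n a.1).val = (emb n b.1).val :=
      congrArg Fin.val (congrArg Prod.fst h)
    have h2 : (bar n (emb n a.2)).val = (bar n (emb n b.2)).val :=
      congrArg Fin.val (congrArg Prod.snd h)
    have h3 : 2 * n - 1 - a.2.val = 2 * n - 1 - b.2.val := h2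
    have := a.2.isLt
    have := b.2.isLt
    exact Prod.ext (Fin.ext h1) (Fin.ext (by omega))
  · rintro ⟨s, t⟩ hp
    simp only [Finset.mem_filter, Finset.mem_univ, true_and] at hp
    obtain ⟨hst, hwts⟩ := hp
    have hs2 := s.isLt
    have ht2 := t.isLt
    rw [Fin.lt_def] at hst hwts
    have hsn : s.val < n := by
      by_contra hcon
      push_neg at hcon
      have hk : (2 * n - 1 - t.val) < n := by omega
      have hl : (2 * n - 1 - s.val) < n := by omega
      have hkl : (⟨2 * n - 1 - t.val, hk⟩ : Fin n) < ⟨2 * n - 1 - s.val, hl⟩ := by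
        rw [Fin.lt_def]; simp only [Fin.val_mk]; omega
      have := hw.2 _ _ hkl
      have e1 : emb n (⟨2 * n - 1 - t.val, hk⟩ : Fin n) = bar n t := Fin.ext (by
        show 2 * n - 1 - t.val = 2 * n - 1 - t.val; rfl)
      have e2 : emb n (⟨2 * n - 1 - s.val, hl⟩ : Fin n) = bar n s := Fin.ext rfl
      rw [e1, e2, hw.1 s, hw.1 t] at this
      rw [Fin.lt_def] at this
      have b1 : (bar n (w t)).val = 2 * n - 1 - (w t).val := rfl
      have b2 : (bar n (w s)).val = 2 * n - 1 - (w s).val := rfl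
      rw [b1, b2] at this
      have := (w s).isLt
      have := (w t).isLt
      omega
    have htn : n ≤ t.val := by
      by_contra hcon
      push_neg at hcon
      have hkl : (⟨s.val, hsn⟩ : Fin n) < ⟨t.val, hcon⟩ := by
        rw [Fin.lt_def]; simp only [Fin.val_mk]; omega
      have := hw.2 _ _ hkl
      have e1 : emb n (⟨s.val, hsn⟩ : Fin n) = s := Fin.ext rfl
      have e2 : emb n (⟨t.val, hcon⟩ : Fin n) = t := Fin.ext rfl
      rw [e1, e2, Fin.lt_def] at this
      omega
    refine ⟨(⟨s.val, hsn⟩, ⟨2 * n - 1 - t.val, by omega⟩), ?_, ?_⟩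
    · simp only [Finset.mem_filter, Finset.mem_univ, true_and]
      have e1 : emb n (⟨s.val, hsn⟩ : Fin n) = s := Fin.ext rfl
      have e2 : emb n (⟨2 * n - 1 - t.val, by omega⟩ : Fin n) = bar n t := Fin.ext rfl
      unfold vfun
      rw [e1, e2, hw.1 t]
      have b1 : (bar n (w t)).val = 2 * n - 1 - (w t).val := rfl
      rw [b1]
      have := (w t).isLt
      omega
    · have e1 : emb n (⟨s.val, hsn⟩ : Fin n) = s := Fin.ext rfl
      have e2 : emb n (⟨2 * n - 1 - t.val, by omega⟩ : Fin n) = bar n t := Fin.ext rfl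
      rw [e1, e2]
      have e3 : bar n (bar n t) = t := Fin.ext (by
        have b1 : (bar n (bar n t)).val = 2 * n - 1 - (2 * n - 1 - t.val) := rfl
        rw [b1]; omega)
      rw [e3]

lemma nstat_eq_NP {w : Equiv.Perm (Fin (2 * n))} (hw : w ∈ WP n) :
    Nstat n w = NPpair n w + NPm n w := by
  unfold Nstat
  rw [inv'_eq_NPpair hw, mstat_eq_NPm hw]

lemma NP_mono {w w' : Equiv.Perm (Fin (2 * n))}
    (h : ∀ k, vfun n w k ≤ vfun n w' k) :
    NPpair n w + NPm n w ≤ NPpair n w' + NPm n w' := by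
  apply add_le_add
  · apply Finset.card_le_card
    intro p hp
    simp only [Finset.mem_filter, Finset.mem_univ, true_and] at hp ⊢
    have := h p.1
    have := h p.2
    omega
  · apply Finset.card_le_card
    intro k hk
    simp only [Finset.mem_filter, Finset.mem_univ, true_and] at hk ⊢
    have := h k
    omega

lemma inn_varpi_eps (i : Fin n) : inn n (varpi n) (eps n i) = 1 := by
  unfold inn varpi eps
  rw [Finset.sum_congr rfl (fun k _ => one_mul _)]
  rw [Finset.sum_ite_eq' Finset.univ i (fun _ => (1 : ℝ))]
  simp

lemma inn_eps_eps (i j : Fin n) : inn n (eps n i) (eps n j) = if i = j then 1 else 0 := by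
  unfold inn eps
  have h : ∀ k : Fin n, ((if k = i then (1:ℝ) else 0) * (if k = j then 1 else 0))
      = if k = i then (if i = j then 1 else 0) else 0 := by
    intro k
    by_cases h1 : k = i
    · subst h1; simp
    · simp [h1]
  rw [Finset.sum_congr rfl (fun k _ => h k)]
  rw [Finset.sum_ite_eq' Finset.univ i (fun _ => if i = j then (1:ℝ) else 0)]
  simp

lemma inn_add_right (u v t : Fin n → ℝ) : inn n u (v + t) = inn n u v + inn n u t := by
  unfold inn
  rw [← Finset.sum_add_distrib]
  exact Finset.sum_congr rfl (fun k _ => by simp [Pi.add_apply, mul_add])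

lemma inn_add_left (u v t : Fin n → ℝ) : inn n (u + v) t = inn n u t + inn n v t := by
  unfold inn
  rw [← Finset.sum_add_distrib]
  exact Finset.sum_congr rfl (fun k _ => by simp [Pi.add_apply, add_mul])

lemma inn_smul_right (c : ℝ) (u v : Fin n → ℝ) : inn n u (c • v) = c * inn n u v := by
  unfold inn
  rw [Finset.mul_sum]
  exact Finset.sum_congr rfl (fun k _ => by simp [Pi.smul_apply]; ring)

lemma inn_smul_left (c : ℝ) (u v : Fin n → ℝ) : inn n (c • u) v = c * inn n u v := by
  unfold inn
  rw [Finset.mul_sum]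
  exact Finset.sum_congr rfl (fun k _ => by simp [Pi.smul_apply]; ring)

lemma inn_case_sum (i j : Fin n) (hij : i ≠ j) :
    inn n (varpi n) (coroot n (eps n i + eps n j)) = 2 := by
  have hself : inn n (eps n i + eps n j) (eps n i + eps n j) = 2 := by
    rw [inn_add_left, inn_add_right, inn_add_right, inn_eps_eps, inn_eps_eps,
      inn_eps_eps, inn_eps_eps]
    simp [hij, hij.symm]
    norm_num
  have hv : inn n (varpi n) (eps n i + eps n j) = 2 := by
    rw [inn_add_right, inn_varpi_eps, inn_varpi_eps]
    norm_num
  unfold coroot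
  rw [inn_smul_right, hself, hv]
  norm_num

lemma inn_case_long (i : Fin n) :
    inn n (varpi n) (coroot n ((2:ℝ) • eps n i)) = 1 := by
  have hself : inn n ((2:ℝ) • eps n i) ((2:ℝ) • eps n i) = 4 := by
    rw [inn_smul_left, inn_smul_right, inn_eps_eps]
    simp
    norm_num
  have hv : inn n (varpi n) ((2:ℝ) • eps n i) = 2 := by
    rw [inn_smul_right, inn_varpi_eps]
    norm_num
  unfold coroot
  rw [inn_smul_right, hself, hv]
  norm_num

lemma eps_sum_ne_two_smul (i j i0 : Fin n) (hij : i ≠ j) :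
    eps n i + eps n j ≠ (2:ℝ) • eps n i0 := by
  intro h
  have h1 := congrFun h i
  simp only [Pi.add_apply, Pi.smul_apply, eps, smul_eq_mul] at h1
  simp only [if_true, eq_self_iff_true] at h1
  rw [if_neg hij] at h1
  by_cases h2 : i = i0
  · rw [if_pos h2] at h1; norm_num at h1
  · rw [if_neg h2] at h1; norm_num at h1

end ChevAux

open ChevAux

/-- Let `w, w' ∈ W^P` and let `β` be a positive root of type `C_n` with `w' = w·s_β` and
`ℓ(w') = ℓ(w) − 1`. Then exactly one of the following holds:
(1) there are `i ≠ j` with `boxes(D(w')) = boxes(D(w)) ∪ {(i,j),(j,i)}`, `β = ε_i + ε_j`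
and `(ϖ_n, β^∨) = 2`;
(2) there is `i` with `boxes(D(w')) = boxes(D(w)) ∪ {(i,i)}`, `β = 2ε_i` and
`(ϖ_n, β^∨) = 1`. -/
theorem chevalley_dichotomy (n : ℕ) (hn : 1 ≤ n)
    (w w' : Equiv.Perm (Fin (2 * n))) (hw : w ∈ WP n) (hw' : w' ∈ WP n)
    (β : Fin n → ℝ) (r : Equiv.Perm (Fin (2 * n)))
    (hβr : rootReflPair n β r) (hprod : w' = w * r)
    (hlen : len n w' + 1 = len n w) :
    Xor'
      (∃ i j : Fin n, i ≠ j ∧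
        boxes n (Dmap n w') = boxes n (Dmap n w) ∪ {(i, j), (j, i)} ∧
        β = eps n i + eps n j ∧ inn n (varpi n) (coroot n β) = 2)
      (∃ i : Fin n,
        boxes n (Dmap n w') = boxes n (Dmap n w) ∪ {(i, i)} ∧
        β = (2 : ℝ) • eps n i ∧ inn n (varpi n) (coroot n β) = 1) := by
  classical
  have hw1 : ∀ p, w (bar n p) = bar n (w p) := hw.1
  have hNstat : Nstat n w = Nstat n w' + 2 := by
    have a := two_mul_len w hw.1
    have b := two_mul_len w' hw'.1
    omega
  have hNP : NPpair n w + NPm n w = NPpair n w' + NPm n w' + 2 := by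
    rw [← nstat_eq_NP hw, ← nstat_eq_NP hw']
    exact hNstat
  rcases hβr with ⟨i, j, hij, hβ, hr⟩ | ⟨i, j, hij, hβ, hr⟩ | ⟨i, hβ, hr⟩
  · -- case β = ε_i − ε_j : impossible since both w, w' ∈ W^P
    exfalso
    have hijv : i.val < j.val := hij
    have hin := i.isLt
    have hjn := j.isLt
    have e1 : Equiv.swap (bar n (emb n i)) (bar n (emb n j)) (emb n i) = emb n i := by
      apply Equiv.swap_apply_of_ne_of_ne
      · exact Fin.ne_of_val_ne (show i.val ≠ 2 * n - 1 - i.val by omega)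
      · exact Fin.ne_of_val_ne (show i.val ≠ 2 * n - 1 - j.val by omega)
    have e2 : Equiv.swap (bar n (emb n i)) (bar n (emb n j)) (emb n j) = emb n j := by
      apply Equiv.swap_apply_of_ne_of_ne
      · exact Fin.ne_of_val_ne (show j.val ≠ 2 * n - 1 - i.val by omega)
      · exact Fin.ne_of_val_ne (show j.val ≠ 2 * n - 1 - j.val by omega)
    have hvij : w' (emb n i) = w (emb n j) := by
      rw [hprod, hr]
      simp only [Equiv.Perm.mul_apply]
      rw [e1, Equiv.swap_apply_left]
    have hvji : w' (emb n j) = w (emb n i) := by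
      rw [hprod, hr]
      simp only [Equiv.Perm.mul_apply]
      rw [e2, Equiv.swap_apply_right]
    have h1 := hw.2 i j hij
    have h2 := hw'.2 i j hij
    rw [hvij, hvji] at h2
    exact absurd (h1.trans h2) (lt_irrefl _)
  · -- case β = ε_i + ε_j
    have hijv : i.val < j.val := hij
    have hin := i.isLt
    have hjn := j.isLt
    have e1 : Equiv.swap (emb n j) (bar n (emb n i)) (emb n i) = emb n i := by
      apply Equiv.swap_apply_of_ne_of_ne
      · exact Fin.ne_of_val_ne (show i.val ≠ j.val by omega)
      · exact Fin.ne_of_val_ne (show i.val ≠ 2 * n - 1 - i.val by omega)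
    have hv'i : w' (emb n i) = bar n (w (emb n j)) := by
      rw [hprod, hr]
      simp only [Equiv.Perm.mul_apply]
      rw [e1, Equiv.swap_apply_left, hw1]
    have e2 : Equiv.swap (emb n i) (bar n (emb n j)) (bar n (emb n i)) = bar n (emb n i) := by
      apply Equiv.swap_apply_of_ne_of_ne
      · exact Fin.ne_of_val_ne (show 2 * n - 1 - i.val ≠ i.val by omega)
      · exact Fin.ne_of_val_ne (show 2 * n - 1 - i.val ≠ 2 * n - 1 - j.val by omega)
    have hv'j : w' (emb n j) = bar n (w (emb n i)) := by
      rw [hprod, hr]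
      simp only [Equiv.Perm.mul_apply]
      rw [Equiv.swap_apply_left, e2, hw1]
    have hv'k : ∀ k : Fin n, k ≠ i → k ≠ j → w' (emb n k) = w (emb n k) := by
      intro k h1 h2
      have hkv1 : k.val ≠ i.val := fun hc => h1 (Fin.ext hc)
      have hkv2 : k.val ≠ j.val := fun hc => h2 (Fin.ext hc)
      have hkn := k.isLt
      have f1 : Equiv.swap (emb n j) (bar n (emb n i)) (emb n k) = emb n k := by
        apply Equiv.swap_apply_of_ne_of_ne
        · exact Fin.ne_of_val_ne (show k.val ≠ j.val from hkv2)
        · exact Fin.ne_of_val_ne (show k.val ≠ 2 * n - 1 - i.val by omega)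
      have f2 : Equiv.swap (emb n i) (bar n (emb n j)) (emb n k) = emb n k := by
        apply Equiv.swap_apply_of_ne_of_ne
        · exact Fin.ne_of_val_ne (show k.val ≠ i.val from hkv1)
        · exact Fin.ne_of_val_ne (show k.val ≠ 2 * n - 1 - j.val by omega)
      rw [hprod, hr]
      simp only [Equiv.Perm.mul_apply]
      rw [f1, f2]
    have hva' : vfun n w' i = 2 * n - 1 - vfun n w j := by
      show (w' (emb n i)).val = _
      rw [hv'i]
      rfl
    have hvb' : vfun n w' j = 2 * n - 1 - vfun n w i := by
      show (w' (emb n j)).val = _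
      rw [hv'j]
      rfl
    have hvk' : ∀ k : Fin n, k ≠ i → k ≠ j → vfun n w' k = vfun n w k := by
      intro k h1 h2
      show (w' (emb n k)).val = _
      rw [hv'k k h1 h2]
      rfl
    have hab : vfun n w i < vfun n w j := hw.2 i j hij
    have hblt := vfun_lt (w := w) j
    have halt := vfun_lt (w := w) i
    have hne_sum : vfun n w i + vfun n w j ≠ 2 * n - 1 := by
      intro hcon
      apply pair_rep_unique hw j i
      apply Fin.ext
      show vfun n w j = 2 * n - 1 - vfun n w i
      omega
    by_cases hS1 : vfun n w i + vfun n w j ≤ 2 * n - 2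
    · exfalso
      have hmono : ∀ k, vfun n w k ≤ vfun n w' k := by
        intro k
        by_cases h1 : k = i
        · subst h1; rw [hva']; omega
        · by_cases h2 : k = j
          · subst h2; rw [hvb']; omega
          · rw [hvk' k h1 h2]
      have := NP_mono hmono
      omega
    have hsum_ge : 2 * n ≤ vfun n w i + vfun n w j := by omega
    have hv'le : ∀ k, vfun n w' k ≤ vfun n w k := by
      intro k
      by_cases h1 : k = i
      · subst h1; rw [hva']; omega
      · by_cases h2 : k = j
        · subst h2; rw [hvb']; omega
        · rw [hvk' k h1 h2]
    by_cases hS3 : n ≤ vfun n w i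
    · exfalso
      have hbn : n + 1 ≤ vfun n w j := by omega
      have hsum1 : 2 * n + 1 ≤ vfun n w i + vfun n w j := by omega
      have hni1 : ((j, i) : Fin n × Fin n) ∉
          Finset.univ.filter (fun p : Fin n × Fin n =>
            2 * n ≤ vfun n w' p.1 + vfun n w' p.2) := by
        simp only [Finset.mem_filter, Finset.mem_univ, true_and, not_le]
        show vfun n w' j + vfun n w' i < 2 * n
        rw [hva', hvb']
        omega
      have hni2 : ((i, j) : Fin n × Fin n) ∉
          insert ((j, i) : Fin n × Fin n)
            (Finset.univ.filter (fun p : Fin n × Fin n =>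
              2 * n ≤ vfun n w' p.1 + vfun n w' p.2)) := by
        rw [Finset.mem_insert]
        rintro (hcon | hcon)
        · have := congrArg Prod.fst hcon
          simp only at this
          exact absurd (congrArg Fin.val this) (by omega)
        · simp only [Finset.mem_filter, Finset.mem_univ, true_and] at hcon
          have hcon2 : 2 * n ≤ vfun n w' i + vfun n w' j := hcon
          rw [hva', hvb'] at hcon2
          omega
      have hni3 : ((i, i) : Fin n × Fin n) ∉
          insert ((i, j) : Fin n × Fin n)
            (insert ((j, i) : Fin n × Fin n)
              (Finset.univ.filter (fun p : Fin n × Fin n =>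
                2 * n ≤ vfun n w' p.1 + vfun n w' p.2))) := by
        rw [Finset.mem_insert, Finset.mem_insert]
        rintro (hcon | hcon | hcon)
        · have := congrArg Prod.snd hcon
          simp only at this
          exact absurd (congrArg Fin.val this) (by omega)
        · have := congrArg Prod.fst hcon
          simp only at this
          exact absurd (congrArg Fin.val this) (by omega)
        · simp only [Finset.mem_filter, Finset.mem_univ, true_and] at hcon
          have hcon2 : 2 * n ≤ vfun n w' i + vfun n w' i := hcon
          rw [hva'] at hcon2
          omega
      have hsub : insert ((i, i) : Fin n × Fin n)
          (insert ((i, j) : Fin n × Fin n)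
            (insert ((j, i) : Fin n × Fin n)
              (Finset.univ.filter (fun p : Fin n × Fin n =>
                2 * n ≤ vfun n w' p.1 + vfun n w' p.2))))
          ⊆ Finset.univ.filter (fun p : Fin n × Fin n =>
              2 * n ≤ vfun n w p.1 + vfun n w p.2) := by
        intro p hp
        rw [Finset.mem_insert, Finset.mem_insert, Finset.mem_insert] at hp
        simp only [Finset.mem_filter, Finset.mem_univ, true_and] at hp ⊢
        rcases hp with rfl | rfl | rfl | hp
        · show 2 * n ≤ vfun n w i + vfun n w i
          omega
        · show 2 * n ≤ vfun n w i + vfun n w j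
          omega
        · show 2 * n ≤ vfun n w j + vfun n w i
          omega
        · have := hv'le p.1
          have := hv'le p.2
          omega
      have hle := Finset.card_le_card hsub
      rw [Finset.card_insert_of_notMem hni3, Finset.card_insert_of_notMem hni2,
        Finset.card_insert_of_notMem hni1] at hle
      have hm : NPm n w' ≤ NPm n w := by
        unfold ChevAux.NPm
        apply Finset.card_le_card
        intro k hk
        simp only [Finset.mem_filter, Finset.mem_univ, true_and] at hk ⊢
        have := hv'le k
        omega
      have e1 : NPpair n w = (Finset.univ.filter (fun p : Fin n × Fin n =>
          2 * n ≤ vfun n w p.1 + vfun n w p.2)).card := rfl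
      have e2 : NPpair n w' = (Finset.univ.filter (fun p : Fin n × Fin n =>
          2 * n ≤ vfun n w' p.1 + vfun n w' p.2)).card := rfl
      omega
    push_neg at hS3
    by_cases hS5 : vfun n w i + vfun n w j = 2 * n
    · -- the good case
      have hmidhi : ∀ k, i < k → k < j → vfun n w k < 2 * n - 1 - vfun n w i := by
        intro k h1 h2
        have hkne_i : k ≠ i := (ne_of_lt h1).symm
        have hkne_j : k ≠ j := ne_of_lt h2
        have hval : vfun n w' k < vfun n w' j := hw'.2 k j h2
        rw [hvk' k hkne_i hkne_j, hvb'] at hval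
        exact hval
      have hcard : (Finset.Ioo i j).card = (Finset.Ioo (vfun n w i) n).card := by
        apply Finset.card_bij (fun (k : Fin n) _ => min (vfun n w k) (2 * n - 1 - vfun n w k))
        · intro k hk
          rw [Finset.mem_Ioo] at hk ⊢
          have h1 := hw.2 i k hk.1
          have h2 := hmidhi k hk.1 hk.2
          have h3 : vfun n w i < vfun n w k := h1
          constructor
          · omega
          · omega
        · intro k1 hk1 k2 hk2 hkk
          have hv1 := vfun_lt (w := w) k1
          have hv2 := vfun_lt (w := w) k2
          have hor : vfun n w k1 = vfun n w k2 ∨ vfun n w k1 = 2 * n - 1 - vfun n w k2 := by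
            omega
          rcases hor with h | h
          · have h2 : w (emb n k1) = w (emb n k2) := Fin.ext h
            have h3 := w.injective h2
            have h4 : (emb n k1).val = (emb n k2).val := congrArg Fin.val h3
            exact Fin.ext h4
          · exfalso
            exact pair_rep_unique hw k1 k2 (Fin.ext h)
        · intro x hx
          rw [Finset.mem_Ioo] at hx
          obtain ⟨k, hk⟩ := pair_rep hw ⟨x, by omega⟩
          have hkval : vfun n w k = x ∨ vfun n w k = 2 * n - 1 - x := by
            rcases hk with h | h
            · left; exact congrArg Fin.val h
            · right; exact congrArg Fin.val h
          have hkvlt := vfun_lt (w := w) k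
          have hik : i < k := by
            rw [← WP_lt_iff hw]
            omega
          have hkj : k < j := by
            rw [← WP_lt_iff hw]
            omega
          refine ⟨k, ?_, ?_⟩
          · rw [Finset.mem_Ioo]; exact ⟨hik, hkj⟩
          · omega
      rw [Fin.card_Ioo, Nat.card_Ioo] at hcard
      have hjia : j.val + vfun n w i = n + i.val := by omega
      left
      refine ⟨⟨i, j, ne_of_lt hij, ?_, hβ, ?_⟩, ?_⟩
      · apply Set.ext
        rintro ⟨p1, p2⟩
        simp only [boxes, Set.mem_setOf_eq, Set.mem_union, Set.mem_insert_iff,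
          Set.mem_singleton_iff, Prod.mk.injEq]
        have hd : ∀ (u : Equiv.Perm (Fin (2 * n))) (q : Fin n),
            Dmap n u q = n + q.val - vfun n u q := fun _ _ => rfl
        by_cases hp1 : p1 = i
        · subst hp1
          have ea : Dmap n w' p1 = j.val + 1 := by
            rw [hd, hva']
            omega
          have eb : Dmap n w p1 = j.val := by
            rw [hd]
            omega
          rw [ea, eb]
          constructor
          · intro h
            by_cases hpj : p2.val < j.val
            · exact Or.inl hpj
            · refine Or.inr (Or.inl ⟨rfl, Fin.ext ?_⟩)
              omega
          · rintro (h | ⟨-, rfl⟩ | ⟨hcon, -⟩)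
            · omega
            · omega
            · exact absurd hcon (ne_of_lt hij)
        · by_cases hp2 : p1 = j
          · subst hp2
            have ea : Dmap n w' p1 = i.val + 1 := by
              rw [hd, hvb']
              omega
            have eb : Dmap n w p1 = i.val := by
              rw [hd]
              omega
            rw [ea, eb]
            constructor
            · intro h
              by_cases hpi : p2.val < i.val
              · exact Or.inl hpi
              · refine Or.inr (Or.inr ⟨rfl, Fin.ext ?_⟩)
                omega
            · rintro (h | ⟨hcon, -⟩ | ⟨-, rfl⟩)
              · omega
              · exact absurd hcon hp1
              · omega
          · have ek : vfun n w' p1 = vfun n w p1 := hvk' p1 hp1 hp2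
            have ea : Dmap n w' p1 = Dmap n w p1 := by rw [hd, hd, ek]
            rw [ea]
            constructor
            · exact Or.inl
            · rintro (h | ⟨hcon, -⟩ | ⟨hcon, -⟩)
              · exact h
              · exact absurd hcon hp1
              · exact absurd hcon hp2
      · rw [hβ]
        exact inn_case_sum i j (ne_of_lt hij)
      · rintro ⟨i0, -, hβ0, -⟩
        rw [hβ] at hβ0
        exact eps_sum_ne_two_smul i j i0 (ne_of_lt hij) hβ0
    · exfalso
      have hsum1 : 2 * n + 1 ≤ vfun n w i + vfun n w j := by omega
      have ha1 : 2 ≤ vfun n w i := by omega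
      obtain ⟨k, hk⟩ := pair_rep hw ⟨vfun n w i - 1, by omega⟩
      have hkval : vfun n w k = vfun n w i - 1 ∨ vfun n w k = 2 * n - vfun n w i := by
        rcases hk with h | h
        · left; exact congrArg Fin.val h
        · right
          have h2 : vfun n w k = 2 * n - 1 - (vfun n w i - 1) := congrArg Fin.val h
          omega
      rcases hkval with hcase | hcase
      · have hki : k < i := by
          rw [← WP_lt_iff hw]
          omega
        have hkne_i : k ≠ i := ne_of_lt hki
        have hkne_j : k ≠ j := ne_of_lt (hki.trans hij)
        have hval : vfun n w' k < vfun n w' i := hw'.2 k i hki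
        rw [hvk' k hkne_i hkne_j, hva'] at hval
        omega
      · have hik : i < k := by
          rw [← WP_lt_iff hw]
          omega
        have hkj : k < j := by
          rw [← WP_lt_iff hw]
          omega
        have hkne_i : k ≠ i := (ne_of_lt hik).symm
        have hkne_j : k ≠ j := ne_of_lt hkj
        have hval : vfun n w' k < vfun n w' j := hw'.2 k j hkj
        rw [hvk' k hkne_i hkne_j, hvb'] at hval
        omega
  · -- case β = 2ε_i
    have hin := i.isLt
    have hv'i : w' (emb n i) = bar n (w (emb n i)) := by
      rw [hprod, hr]
      simp only [Equiv.Perm.mul_apply]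
      rw [Equiv.swap_apply_left, hw1]
    have hv'k : ∀ k : Fin n, k ≠ i → w' (emb n k) = w (emb n k) := by
      intro k h1
      have hkv1 : k.val ≠ i.val := fun hc => h1 (Fin.ext hc)
      have hkn := k.isLt
      have f1 : Equiv.swap (emb n i) (bar n (emb n i)) (emb n k) = emb n k := by
        apply Equiv.swap_apply_of_ne_of_ne
        · exact Fin.ne_of_val_ne (show k.val ≠ i.val from hkv1)
        · exact Fin.ne_of_val_ne (show k.val ≠ 2 * n - 1 - i.val by omega)
      rw [hprod, hr]
      simp only [Equiv.Perm.mul_apply]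
      rw [f1]
    have hva' : vfun n w' i = 2 * n - 1 - vfun n w i := by
      show (w' (emb n i)).val = _
      rw [hv'i]
      rfl
    have hvk' : ∀ k : Fin n, k ≠ i → vfun n w' k = vfun n w k := by
      intro k h1
      show (w' (emb n k)).val = _
      rw [hv'k k h1]
      rfl
    have halt := vfun_lt (w := w) i
    by_cases hS1 : vfun n w i < n
    · exfalso
      have hmono : ∀ k, vfun n w k ≤ vfun n w' k := by
        intro k
        by_cases h1 : k = i
        · subst h1; rw [hva']; omega
        · rw [hvk' k h1]
      have := NP_mono hmono
      omega
    push_neg at hS1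
    have hvn : vfun n w i = n := by
      by_contra hcon
      have ha1 : n + 1 ≤ vfun n w i := by omega
      obtain ⟨k, hk⟩ := pair_rep hw ⟨n, by omega⟩
      have hkval : vfun n w k = n ∨ vfun n w k = n - 1 := by
        rcases hk with h | h
        · left; exact congrArg Fin.val h
        · right
          have h2 : vfun n w k = 2 * n - 1 - n := congrArg Fin.val h
          omega
      have hki : k < i := by
        rw [← WP_lt_iff hw]
        omega
      have hkne_i : k ≠ i := ne_of_lt hki
      have hval : vfun n w' k < vfun n w' i := hw'.2 k i hki
      rw [hvk' k hkne_i, hva'] at hval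
      omega
    right
    refine ⟨⟨i, ?_, hβ, ?_⟩, ?_⟩
    · apply Set.ext
      rintro ⟨p1, p2⟩
      simp only [boxes, Set.mem_setOf_eq, Set.mem_union, Set.mem_singleton_iff,
        Prod.mk.injEq]
      have hd : ∀ (u : Equiv.Perm (Fin (2 * n))) (q : Fin n),
          Dmap n u q = n + q.val - vfun n u q := fun _ _ => rfl
      by_cases hp1 : p1 = i
      · subst hp1
        have ea : Dmap n w' p1 = p1.val + 1 := by
          rw [hd, hva', hvn]
          omega
        have eb : Dmap n w p1 = p1.val := by
          rw [hd, hvn]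
          omega
        rw [ea, eb]
        constructor
        · intro h
          by_cases hpi : p2.val < p1.val
          · exact Or.inl hpi
          · refine Or.inr ⟨rfl, Fin.ext ?_⟩
            omega
        · rintro (h | ⟨-, rfl⟩)
          · omega
          · omega
      · have ek : vfun n w' p1 = vfun n w p1 := hvk' p1 hp1
        have ea : Dmap n w' p1 = Dmap n w p1 := by rw [hd, hd, ek]
        rw [ea]
        constructor
        · exact Or.inl
        · rintro (h | ⟨hcon, -⟩)
          · exact h
          · exact absurd hcon hp1
    · rw [hβ]
      exact inn_case_long i
    · rintro ⟨i0, j0, hne0, -, hβ0, -⟩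
      apply eps_sum_ne_two_smul i0 j0 i hne0
      rw [← hβ0, hβ]
end
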